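/- The sequence r ↦ 2^{−r} · (|B_{2r−2}| / |B_{r−1}|) · ζ(r), defined for integers r ≥ 3 with r−1 even (i.e. r odd), tends to infinity as r → ∞. -/

import Mathlib

open scoped BigOperators

/-- The Riemann zeta value `ζ(r) = ∑_{n ≥ 1} n⁻ʳ` as a real number. -/
noncomputable def zetaReal (r : ℕ) : ℝ := ∑' n : ℕ, 1 / ((n : ℝ) + 1) ^ r

open Real Filter
open scoped Nat

private lemma zetaReal_eq (p : ℕ) (hp : 2 ≤ p) :
    zetaReal p = ∑' n : ℕ, 1 / (n : ℝ) ^ p := by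
  rw [Summable.tsum_eq_zero_add (summable_one_div_nat_pow.mpr (by omega))]
  rw [show ((0:ℕ):ℝ) = 0 by norm_num, zero_pow (by omega : p ≠ 0)]
  rw [zetaReal]
  push_cast
  simp

private lemma summable_zeta (p : ℕ) (hp : 2 ≤ p) :
    Summable (fun n : ℕ => 1 / ((n : ℝ) + 1) ^ p) := by
  have h := (summable_nat_add_iff 1).mpr (summable_one_div_nat_pow.mpr (by omega : 1 < p))
  refine h.congr fun n => ?_
  push_cast
  ring

private lemma one_le_zetaReal (p : ℕ) (hp : 2 ≤ p) : 1 ≤ zetaReal p := by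
  have h := Summable.le_tsum (summable_zeta p hp) 0 (fun i _ => by positivity)
  rw [zetaReal]
  refine le_trans (le_of_eq ?_) h
  norm_num

private lemma zetaReal_le_two (p : ℕ) (hp : 2 ≤ p) : zetaReal p ≤ 2 := by
  have h1 : zetaReal p ≤ zetaReal 2 := by
    refine Summable.tsum_le_tsum (fun n => ?_) (summable_zeta p hp) (summable_zeta 2 le_rfl)
    have h01 : (1:ℝ) ≤ (n:ℝ) + 1 := by
      have := Nat.cast_nonneg (α := ℝ) n
      linarith
    exact one_div_le_one_div_of_le (by positivity) (pow_le_pow_right₀ h01 hp)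
  have h2 : zetaReal 2 = π ^ 2 / 6 := by
    rw [zetaReal_eq 2 le_rfl]
    have := hasSum_zeta_two.tsum_eq
    simpa using this
  have hpi : π < 3.15 := pi_lt_d2
  have hpi0 : 0 < π := pi_pos
  nlinarith

private lemma abs_bernoulli_eq (k : ℕ) (hk : k ≠ 0) :
    |(bernoulli (2 * k) : ℝ)| = zetaReal (2 * k) * 2 * (2 * k)! / (2 * π) ^ (2 * k) := by
  have hz : zetaReal (2 * k) =
      (-1 : ℝ) ^ (k + 1) * (2 : ℝ) ^ (2 * k - 1) * π ^ (2 * k) *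
        bernoulli (2 * k) / (2 * k)! := by
    rw [zetaReal_eq (2 * k) (by omega)]
    exact (hasSum_zeta_nat hk).tsum_eq
  have hfac : (0:ℝ) < (2 * k)! := by exact_mod_cast Nat.factorial_pos _
  have hpi0 : (0:ℝ) < π := pi_pos
  have hzpos : (1:ℝ) ≤ zetaReal (2 * k) := one_le_zetaReal _ (by omega)
  have habs : |zetaReal (2 * k)| = zetaReal (2 * k) := abs_of_pos (by linarith)
  have h2 : (2:ℝ) ^ (2 * k) = 2 ^ (2 * k - 1) * 2 := by
    rw [← pow_succ]
    congr 1
    omega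
  have h := congrArg abs hz
  rw [habs, abs_div, abs_mul, abs_mul, abs_mul, abs_pow, abs_neg, abs_one, one_pow,
    one_mul, abs_pow, abs_pow, abs_of_pos (show (0:ℝ) < 2 by norm_num),
    abs_of_pos hpi0, abs_of_pos hfac] at h
  rw [mul_pow, h2, h]
  have hp2 : (0:ℝ) < (2:ℝ) ^ (2 * k - 1) := by positivity
  have hppi : (0:ℝ) < π ^ (2 * k) := by positivity
  field_simp

theorem ratio_covolume_mass_tendsto_atTop :
    Filter.Tendsto
      (fun r : ℕ =>
        (2 : ℝ) ^ (-(r : ℤ)) *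
          (|(bernoulli (2 * r - 2) : ℝ)| / |(bernoulli (r - 1) : ℝ)|) * zetaReal r)
      (Filter.atTop ⊓ Filter.principal {r : ℕ | Odd r ∧ 3 ≤ r}) Filter.atTop := by
  -- bernoulli bounds
  have bern_lower : ∀ k : ℕ, k ≠ 0 →
      2 * (2 * k)! / (2 * π) ^ (2 * k) ≤ |(bernoulli (2 * k) : ℝ)| := by
    intro k hk
    rw [abs_bernoulli_eq k hk]
    have hz : (1:ℝ) ≤ zetaReal (2 * k) := one_le_zetaReal _ (by omega)
    have hfac : (0:ℝ) ≤ (2 * k)! := by positivity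
    have hp : (0:ℝ) < (2 * π) ^ (2 * k) := by positivity
    gcongr
    nlinarith
  have bern_upper : ∀ k : ℕ, k ≠ 0 →
      |(bernoulli (2 * k) : ℝ)| ≤ 4 * (2 * k)! / (2 * π) ^ (2 * k) := by
    intro k hk
    rw [abs_bernoulli_eq k hk]
    have hz : zetaReal (2 * k) ≤ 2 := zetaReal_le_two _ (by omega)
    have hfac : (0:ℝ) ≤ (2 * k)! := by positivity
    have hp : (0:ℝ) < (2 * π) ^ (2 * k) := by positivity
    gcongr ?_ / _
    nlinarith
  -- auxiliary tendsto : k ! / (4 * 160 ^ k) → ∞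
  have h160 : Tendsto (fun k : ℕ => (160 : ℝ) ^ k / k !) atTop (nhds 0) :=
    FloorSemiring.tendsto_pow_div_factorial_atTop (160 : ℝ)
  have hinv : Tendsto (fun k : ℕ => (k ! : ℝ) / 160 ^ k) atTop atTop := by
    have hpos : ∀ k : ℕ, (0:ℝ) < (160 : ℝ) ^ k / k ! := fun k => by positivity
    have h1 := tendsto_nhdsWithin_of_tendsto_nhds_of_eventually_within _ h160
      (Filter.Eventually.of_forall fun k => Set.mem_Ioi.mpr (hpos k))
    have h2 := h1.inv_tendsto_nhdsGT_zero
    refine h2.congr fun k => ?_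
    simp
  have hg : Tendsto (fun k : ℕ => (k ! : ℝ) / (4 * 160 ^ k)) atTop atTop := by
    have h3 := hinv.atTop_div_const (show (0:ℝ) < 4 by norm_num)
    refine h3.congr fun k => ?_
    rw [div_div, mul_comm]
  have hhalf : Tendsto (fun r : ℕ => (r - 1) / 2) atTop atTop := by
    refine tendsto_atTop_atTop.mpr fun b => ⟨2 * b + 1, fun r hr => ?_⟩
    omega
  have hcomp : Tendsto (fun r : ℕ => (((r - 1) / 2)! : ℝ) / (4 * 160 ^ ((r - 1) / 2)))
      atTop atTop := hg.comp hhalf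
  refine tendsto_atTop_mono' _ ?_ (hcomp.mono_left inf_le_left)
  rw [Filter.EventuallyLE, Filter.eventually_inf_principal]
  refine Filter.Eventually.of_forall fun r hr => ?_
  obtain ⟨hodd, hr3⟩ := hr
  obtain ⟨k, hk⟩ : ∃ k, r = 2 * k + 1 := hodd
  subst hk
  have hk1 : 1 ≤ k := by omega
  rw [show 2 * (2 * k + 1) - 2 = 2 * (2 * k) from by omega,
    show 2 * k + 1 - 1 = 2 * k from by omega,
    show 2 * k / 2 = k from by omega]
  -- bounds
  have hA := bern_lower (2 * k) (by omega)
  have hB := bern_upper k (by omega)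
  have hBlow := bern_lower k (by omega)
  have hZ : (1:ℝ) ≤ zetaReal (2 * k + 1) := one_le_zetaReal _ (by omega)
  have hpi0 : (0:ℝ) < π := pi_pos
  have hF4 : (0:ℝ) < (2 * (2 * k))! := by exact_mod_cast Nat.factorial_pos _
  have hF2 : (0:ℝ) < (2 * k)! := by exact_mod_cast Nat.factorial_pos _
  have hF1 : (0:ℝ) < (k)! := by exact_mod_cast Nat.factorial_pos _
  have hBpos : (0:ℝ) < |(bernoulli (2 * k) : ℝ)| := lt_of_lt_of_le (by positivity) hBlow
  have hP : (0:ℝ) < (2 * π) ^ (2 * k) := by positivity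
  have hT : (0:ℝ) < (2:ℝ) ^ (2 * k) := by positivity
  -- factorial inequality : (2k)! * k! ≤ (4k)!
  have hFnat : (2 * k)! * k ! ≤ (2 * (2 * k))! := by
    calc (2 * k)! * k ! ≤ (2 * k)! * (2 * k)! := by
          exact Nat.mul_le_mul_left _ (Nat.factorial_le (by omega))
      _ ≤ (2 * k + 2 * k)! := Nat.le_of_dvd (Nat.factorial_pos _)
          (Nat.factorial_mul_factorial_dvd_factorial_add _ _)
      _ = (2 * (2 * k))! := by ring_nf
  have hF : ((2 * k)! : ℝ) * (k)! ≤ ((2 * (2 * k))! : ℝ) := by exact_mod_cast hFnat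
  -- power comparison : 2^(2k) * (2π)^(2k) ≤ 160^k
  have hTP : (2:ℝ) ^ (2 * k) * (2 * π) ^ (2 * k) ≤ 160 ^ k := by
    rw [← mul_pow, pow_mul]
    refine pow_le_pow_left₀ (by positivity) ?_ k
    have hpi : π < 3.15 := pi_lt_d2
    nlinarith
  have hpow : (2:ℝ) ^ (-((2 * k + 1 : ℕ) : ℤ)) = 1 / ((2:ℝ) ^ (2 * k) * 2) := by
    rw [zpow_neg, zpow_natCast, one_div, pow_succ]
  rw [hpow]
  have hPP : (2 * π) ^ (2 * (2 * k)) = ((2 * π) ^ (2 * k)) ^ 2 := by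
    rw [← pow_mul]
    congr 1
    ring
  calc ((k)! : ℝ) / (4 * 160 ^ k)
      ≤ ((k)! : ℝ) / (4 * ((2:ℝ) ^ (2 * k) * (2 * π) ^ (2 * k))) := by
        apply div_le_div_of_nonneg_left (by positivity) (by positivity)
        nlinarith
    _ = 1 / ((2:ℝ) ^ (2 * k) * 2) *
        ((2 * (((2 * k)! : ℝ) * (k)!) / ((2 * π) ^ (2 * k)) ^ 2) /
          (4 * (2 * k)! / (2 * π) ^ (2 * k))) := by
        field_simp
    _ ≤ 1 / ((2:ℝ) ^ (2 * k) * 2) *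
        ((2 * (2 * (2 * k))! / ((2 * π) ^ (2 * k)) ^ 2) /
          (4 * (2 * k)! / (2 * π) ^ (2 * k))) := by
        have hb : (0:ℝ) < 4 * (2 * k)! / (2 * π) ^ (2 * k) := by positivity
        gcongr
    _ = 1 / ((2:ℝ) ^ (2 * k) * 2) *
        ((2 * (2 * (2 * k))! / (2 * π) ^ (2 * (2 * k))) /
          (4 * (2 * k)! / (2 * π) ^ (2 * k))) := by rw [hPP]
    _ ≤ 1 / ((2:ℝ) ^ (2 * k) * 2) *
        (|(bernoulli (2 * (2 * k)) : ℝ)| / |(bernoulli (2 * k) : ℝ)|) := by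
        have hone : (0:ℝ) ≤ 1 / ((2:ℝ) ^ (2 * k) * 2) := by positivity
        refine mul_le_mul_of_nonneg_left ?_ hone
        exact div_le_div₀ (abs_nonneg _) hA hBpos hB
    _ ≤ 1 / ((2:ℝ) ^ (2 * k) * 2) *
        (|(bernoulli (2 * (2 * k)) : ℝ)| / |(bernoulli (2 * k) : ℝ)|) *
        zetaReal (2 * k + 1) := by
        have : (0:ℝ) ≤ 1 / ((2:ℝ) ^ (2 * k) * 2) *
            (|(bernoulli (2 * (2 * k)) : ℝ)| / |(bernoulli (2 * k) : ℝ)|) := by positivity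
        exact le_mul_of_one_le_right this hZ
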